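/- Let A(x) := Σ_{n≥0} (−1)^n · p^{n²}·y^{2n}/(p;p)_n · x^n ∈ ℚ(p,y)[[x]], and let B(x) := A(x) − p·x·y·A(p·x). Since B has constant coefficient 1, define G(x) := A(p·x)/B(x). Then G satisfies the functional equation G(x) · (1 − p·x·y − p·x·y·(−p + y + p²·x·y)·G(p·x)) = 1 + p²·x·y·G(p·x), where for a scalar c ∈ ℚ(p,y), F(c·x) denotes the series whose n-th coefficient is c^n times that of F. -/

import Mathlib

/-- The field `ℚ(p,y)`, realized as rational functions in `y` over `ℚ(p)`. -/
abbrev K2 : Type := RatFunc (RatFunc ℚ)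

/-- The variable `p` of `ℚ(p,y)`. -/
noncomputable def pv : K2 := RatFunc.C RatFunc.X

/-- The variable `y` of `ℚ(p,y)`. -/
noncomputable def yv : K2 := RatFunc.X

/-- `A(x) = Σ_{n≥0} (-1)^n p^{n²} y^{2n} / (p;p)_n · x^n ∈ ℚ(p,y)[[x]]`. -/
noncomputable def Aser : PowerSeries K2 :=
  PowerSeries.mk fun n =>
    (-1 : K2) ^ n * pv ^ (n ^ 2) * yv ^ (2 * n) /
      ∏ i ∈ Finset.range n, (1 - pv ^ (i + 1))

/-- `B(x) = A(x) - p·x·y·A(p·x)`. -/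
noncomputable def Bser : PowerSeries K2 :=
  Aser - PowerSeries.C (R := K2) (pv * yv) * PowerSeries.X * PowerSeries.rescale pv Aser

/-- `G(x) = A(p·x)/B(x)` (the inverse exists since `B` has constant coefficient `1`). -/
noncomputable def Gsym : PowerSeries K2 :=
  PowerSeries.rescale pv Aser * Bser⁻¹

open PowerSeries

lemma pv_pow_ne_one (k : ℕ) (hk : 1 ≤ k) : (pv : K2) ^ k ≠ 1 := by
  intro h
  have h2 : RatFunc.C (RatFunc.X ^ k : RatFunc ℚ) = RatFunc.C 1 := by
    simpa [pv, map_pow] using h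
  have h3 : (RatFunc.X : RatFunc ℚ) ^ k = 1 := RatFunc.C.injective h2
  have h4 : (algebraMap (Polynomial ℚ) (RatFunc ℚ)) (Polynomial.X ^ k) =
      algebraMap (Polynomial ℚ) (RatFunc ℚ) 1 := by
    simpa [map_pow, RatFunc.algebraMap_X] using h3
  have h5 : (Polynomial.X : Polynomial ℚ) ^ k = 1 := RatFunc.algebraMap_injective ℚ h4
  have := congrArg (fun q => Polynomial.coeff q 0) h5
  simp [Polynomial.coeff_X_pow] at this
  omega

lemma one_sub_pv_pow_ne (k : ℕ) (hk : 1 ≤ k) : (1 : K2) - pv ^ k ≠ 0 :=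
  sub_ne_zero.mpr (Ne.symm (pv_pow_ne_one k hk))

lemma prod_ne (n : ℕ) : (∏ i ∈ Finset.range n, ((1 : K2) - pv ^ (i + 1))) ≠ 0 :=
  Finset.prod_ne_zero_iff.mpr fun i _ => one_sub_pv_pow_ne (i + 1) (by omega)

lemma key : Aser = PowerSeries.rescale pv Aser -
    PowerSeries.C (R := K2) (pv * yv ^ 2) * PowerSeries.X *
      PowerSeries.rescale pv (PowerSeries.rescale pv Aser) := by
  ext n
  rw [mul_assoc]
  cases n with
  | zero =>
      simp [Aser, rescale_mk]
  | succ n =>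
      have hsq : (n + 1) ^ 2 = n ^ 2 + 2 * n + 1 := by ring
      simp only [map_sub, coeff_rescale, Aser, coeff_mk, coeff_C_mul,
        coeff_succ_X_mul, Finset.prod_range_succ, hsq]
      field_simp [prod_ne n, one_sub_pv_pow_ne (n + 1) (by omega)]
      ring

lemma rescale_C' (s r : K2) :
    PowerSeries.rescale s (PowerSeries.C (R := K2) r) = PowerSeries.C (R := K2) r := by
  ext n
  rw [PowerSeries.coeff_rescale]
  cases n <;> simp [PowerSeries.coeff_C]

lemma constA : PowerSeries.constantCoeff (R := K2) Aser = 1 := by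
  simp [Aser, ← coeff_zero_eq_constantCoeff, coeff_mk]

lemma constB : PowerSeries.constantCoeff (R := K2) Bser = 1 := by
  simp [Bser, ← coeff_zero_eq_constantCoeff, mul_assoc, constA,
    coeff_zero_eq_constantCoeff, map_sub, map_mul]


/-- the functional equation
`G(x)·(1 - p·x·y - p·x·y·(-p + y + p²·x·y)·G(p·x)) = 1 + p²·x·y·G(p·x)`. -/
theorem stmt_11 :
    Gsym * (1 - PowerSeries.C (R := K2) (pv * yv) * PowerSeries.X -
        PowerSeries.C (R := K2) (pv * yv) * PowerSeries.X *
          (PowerSeries.C (R := K2) (-pv) + PowerSeries.C (R := K2) yv +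
            PowerSeries.C (R := K2) (pv ^ 2 * yv) * PowerSeries.X) *
          PowerSeries.rescale pv Gsym) =
      1 + PowerSeries.C (R := K2) (pv ^ 2 * yv) * PowerSeries.X *
        PowerSeries.rescale pv Gsym := by
  set a := rescale pv Aser with ha
  set a2 := rescale pv a with ha2
  set b' := rescale pv Bser with hb'
  set g' := rescale pv Gsym with hg'
  have hBinv : Bser⁻¹ * Bser = 1 :=
    PowerSeries.inv_mul_cancel Bser (by rw [constB]; exact one_ne_zero)
  have h1 : Gsym * Bser = a := by
    rw [Gsym, mul_assoc, hBinv, mul_one]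
  have h2 : g' * b' = a2 := by
    rw [hg', hb', ha2, Gsym, map_mul, ha, mul_assoc, ← map_mul, hBinv, map_one, mul_one]
  have h4 : b' = a - PowerSeries.C (R := K2) pv ^ 2 * PowerSeries.C (R := K2) yv * PowerSeries.X * a2 := by
    rw [hb', Bser, map_sub, map_mul, map_mul, rescale_X, ← ha, ← ha2]
    rw [rescale_C']
    push_cast [map_mul]
    ring
  have h5 : Aser = a - PowerSeries.C (R := K2) pv * PowerSeries.C (R := K2) yv ^ 2 * PowerSeries.X * a2 := by
    have := key
    rw [← ha, ← ha2] at this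
    rw [this]; push_cast [map_mul, map_pow]; ring
  have hbdef : Bser = Aser - PowerSeries.C (R := K2) pv * PowerSeries.C (R := K2) yv * PowerSeries.X * a := by
    rw [Bser, ← ha, map_mul]
  have hb'0 : PowerSeries.constantCoeff (R := K2) b' ≠ 0 := by
    rw [hb', ← coeff_zero_eq_constantCoeff, coeff_rescale, pow_zero, one_mul,
      coeff_zero_eq_constantCoeff, constB]
    exact one_ne_zero
  have hB0 : Bser ≠ 0 := fun h => one_ne_zero (α := K2) (by rw [← constB, h, map_zero])
  have hne : Bser * b' ≠ 0 := mul_ne_zero hB0 (fun h => hb'0 (by rw [h, map_zero]))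
  apply mul_right_cancel₀ hne
  simp only [map_mul, map_neg, map_pow]
  set P := PowerSeries.C (R := K2) pv with hP
  set Y := PowerSeries.C (R := K2) yv with hY
  set x := (PowerSeries.X : PowerSeries K2) with hx
  linear_combination ((1 - P*Y*x)*b' - P*Y*x*(-P+Y+P^2*Y*x)*a2) * h1 +
    (-(P*Y*x*(-P+Y+P^2*Y*x)*(Gsym*Bser)) - P^2*Y*x*Bser) * h2 +
    (a - Aser) * h4 + (-a) * h5 + (-b' - P^2*Y*x*a2) * hbdef
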